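/- arXiv:math/0107095 — 2 statements merged into one kernel-verified Lean document; each statement's English description precedes it below -/
import Mathlib

section
/- For any simply connected region R, any two order-n ribbon tilings α and β of R contain the same number of tiles of each level c ∈ ℤ. -/
/-- A square of the grid, indexed by its `(x, y)` coordinates. -/
abbrev Square : Type := ℤ × ℤ

/-- Two squares are adjacent if they share an edge. -/
def SqAdj (s t : Square) : Prop :=
  (s.1 = t.1 ∧ (s.2 = t.2 + 1 ∨ s.2 + 1 = t.2)) ∨
  (s.2 = t.2 ∧ (s.1 = t.1 + 1 ∨ s.1 + 1 = t.1))

/-- A set of squares is connected with respect to edge-adjacency. -/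
def ConnOn (S : Set Square) : Prop :=
  ∀ a ∈ S, ∀ b ∈ S, Relation.ReflTransGen (fun x y => x ∈ S ∧ y ∈ S ∧ SqAdj x y) a b

/-- Winding number of a sequence of squares around the square `p`: the signed
number of crossings of the upward vertical ray above (the center of) `p`;
a leftward horizontal move strictly above `p` counts `+1`, so that a
counterclockwise loop around `p` has winding number `+1`. -/
def sqWinding (p : Square) (L : List Square) : ℤ :=
  ((L.zip L.tail).map (fun ab : Square × Square =>
    if ab.1.2 = ab.2.2 ∧ p.2 < ab.1.2 ∧ ab.1.1 = p.1 + 1 ∧ ab.2.1 = p.1 then (1 : ℤ)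
    else if ab.1.2 = ab.2.2 ∧ p.2 < ab.1.2 ∧ ab.1.1 = p.1 ∧ ab.2.1 = p.1 + 1 then (-1 : ℤ)
    else 0)).sum

/-- A closed cycle of squares all lying in `S`. -/
def SqLoopIn (S : Set Square) (L : List Square) : Prop :=
  L ≠ [] ∧ (∀ s ∈ L, s ∈ S) ∧ L.Chain' SqAdj ∧ L.head? = L.getLast?

/-- A set of squares is simply connected if no cycle of squares in it encircles
a square outside of it with nonzero winding number. -/
def SimplyConnectedSq (S : Set Square) : Prop :=
  ∀ p : Square, p ∉ S → ∀ L : List Square, SqLoopIn S L → sqWinding p L = 0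

/-- A region: a finite, nonempty, connected set of squares. -/
def IsRegion (R : Finset Square) : Prop := R.Nonempty ∧ ConnOn ↑R

/-- A ribbon tile of order `n`: a connected set of `n` squares containing
exactly one square of each color `c`, where the square `(x, y)` has color
`(x + y) mod n`. -/
def IsRibbonTile (n : ℕ) (t : Finset Square) : Prop :=
  ConnOn ↑t ∧ t.card = n ∧
  ∀ c : ℤ, 0 ≤ c → c < n → ∃! s, s ∈ t ∧ (s.1 + s.2) % n = c

/-- An order-`n` ribbon tiling of `R`: a partition of `R` into order-`n`
ribbon tiles. -/
def IsRibbonTiling (n : ℕ) (R : Finset Square) (α : Finset (Finset Square)) : Prop :=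
  (∀ t ∈ α, IsRibbonTile n t) ∧ (∀ t ∈ α, t ⊆ R) ∧
  (∀ s ∈ R, ∃! t, t ∈ α ∧ s ∈ t)

/-- Two tilings differ by a local replacement move: one is obtained from the
other by removing a single pair of tiles and adding a different pair of tiles
covering the same squares. -/
def LocalMove (α β : Finset (Finset Square)) : Prop :=
  ∃ t₁ t₂ u₁ u₂ : Finset Square, t₁ ∈ α ∧ t₂ ∈ α ∧ t₁ ≠ t₂ ∧ u₁ ≠ u₂ ∧
    ({t₁, t₂} : Finset (Finset Square)) ≠ {u₁, u₂} ∧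
    t₁ ∪ t₂ = u₁ ∪ u₂ ∧
    β = (α \ {t₁, t₂}) ∪ {u₁, u₂}

/-- The "left of" relation on squares: `s` is directly left (same level,
smaller `x`) or indirectly left (levels differing by one, `x ≤ x'`, `y ≥ y'`)
of `s'`. -/
def sqPrec (s t : Square) : Prop :=
  (s.1 + s.2 = t.1 + t.2 ∧ s.1 < t.1) ∨
  (|s.1 + s.2 - (t.1 + t.2)| = 1 ∧ s.1 ≤ t.1 ∧ t.2 ≤ s.2)

/-- The "left of" relation for (sets of) squares: `t₁ ≺ t₂` if some square of
`t₁` is left of some square of `t₂`.  A single square `s` is treated as the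
singleton `{s}`. -/
def TilePrec (t₁ t₂ : Finset Square) : Prop :=
  ∃ s₁ ∈ t₁, ∃ s₂ ∈ t₂, sqPrec s₁ s₂

/-- The boundary `B_R` of a region: squares not in `R` adjacent to a square
of `R`. -/
def boundarySet (R : Finset Square) : Set Square :=
  {s | s ∉ R ∧ ∃ r ∈ R, SqAdj s r}

/-- The level of a tile: the level `x + y` of its lowest square. -/
def tileLevel (t : Finset Square) : ℤ := ((t.image fun s : Square => s.1 + s.2).min).untopD 0

/-- `IsNthTile α c i t`: `t` is the tile `t_{c,i}(α)`, i.e. the `i`-th tile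
(0-indexed, from left to right with respect to `≺`) of level `c` in the
tiling `α`. -/
def IsNthTile (α : Finset (Finset Square)) (c : ℤ) (i : ℕ) (t : Finset Square) : Prop :=
  t ∈ α ∧ tileLevel t = c ∧
  {t' : Finset Square | t' ∈ α ∧ t' ≠ t ∧ tileLevel t' = c ∧ TilePrec t' t}.ncard = i



lemma sqadj_level {s t : Square} (h : SqAdj s t) :
    s.1 + s.2 = t.1 + t.2 + 1 ∨ t.1 + t.2 = s.1 + s.2 + 1 := by
  rcases h with ⟨h1, h2 | h2⟩ | ⟨h1, h2 | h2⟩ <;> omega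

lemma conn_interval {t : Finset Square} (hc : ConnOn ↑t)
    {a b : Square} (ha : a ∈ t) (hb : b ∈ t) {ℓ : ℤ}
    (h1 : a.1 + a.2 ≤ ℓ) (h2 : ℓ ≤ b.1 + b.2) :
    ∃ s ∈ t, s.1 + s.2 = ℓ := by
  suffices H : ∀ b' : Square,
      Relation.ReflTransGen (fun x y => x ∈ (↑t : Set Square) ∧ y ∈ ↑t ∧ SqAdj x y) a b' →
      ℓ ≤ b'.1 + b'.2 → ∃ s ∈ t, s.1 + s.2 = ℓ by
    exact H b (hc a (by simpa) b (by simpa)) h2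
  intro b' hrt
  induction hrt with
  | refl => intro h; exact ⟨a, ha, by omega⟩
  | tail hab hbc ih =>
    intro hlc
    rename_i mid c
    rcases le_or_gt ℓ (mid.1 + mid.2) with hh | hh
    · exact ih hh
    · have := sqadj_level hbc.2.2
      exact ⟨c, by simpa using hbc.2.1, by omega⟩

lemma ribbon_filter_card {n : ℕ} (hn : 1 ≤ n) {t : Finset Square} (h : IsRibbonTile n t)
    (ℓ : ℤ) :
    (t.filter (fun s => s.1 + s.2 = ℓ)).card
      = if tileLevel t ≤ ℓ ∧ ℓ < tileLevel t + n then 1 else 0 := by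
  obtain ⟨hconn, hcard, hcol⟩ := h
  have hpos : (0:ℤ) < n := by exact_mod_cast hn
  have hne : t.Nonempty := by rw [← Finset.card_pos, hcard]; omega
  -- injectivity of level on t
  have hinj : ∀ s ∈ t, ∀ s' ∈ t, s.1 + s.2 = s'.1 + s'.2 → s = s' := by
    intro s hs s' hs' hlv
    obtain ⟨u, -, huniq⟩ := hcol ((s.1 + s.2) % n) (Int.emod_nonneg _ (by omega))
      (Int.emod_lt_of_pos _ hpos)
    have h1 := huniq s ⟨hs, rfl⟩
    have h2 := huniq s' ⟨hs', by rw [← hlv]⟩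
    rw [h1, h2]
  have himgne : (t.image fun s : Square => s.1 + s.2).Nonempty := hne.image _
  set m := (t.image fun s : Square => s.1 + s.2).min' himgne with hm
  set M := (t.image fun s : Square => s.1 + s.2).max' himgne with hM
  obtain ⟨am, ham, hamv⟩ := Finset.mem_image.1 (Finset.min'_mem _ himgne)
  obtain ⟨aM, haM, haMv⟩ := Finset.mem_image.1 (Finset.max'_mem _ himgne)
  have hamv' : am.1 + am.2 = m := hamv
  have haMv' : aM.1 + aM.2 = M := haMv
  have himg : (t.image fun s : Square => s.1 + s.2) = Finset.Icc m M := by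
    apply Finset.Subset.antisymm
    · intro x hx
      exact Finset.mem_Icc.2 ⟨Finset.min'_le _ _ hx, Finset.le_max' _ _ hx⟩
    · intro x hx
      rw [Finset.mem_Icc] at hx
      obtain ⟨s, hs, hsv⟩ := conn_interval (ℓ := x) hconn ham haM (by omega) (by omega)
      exact Finset.mem_image.2 ⟨s, hs, hsv⟩
  have hcardimg : (t.image fun s : Square => s.1 + s.2).card = n := by
    rw [Finset.card_image_of_injOn, hcard]
    intro s hs s' hs' hh
    exact hinj s (by simpa using hs) s' (by simpa using hs') hh
  have hMm : M = m + n - 1 := by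
    have := hcardimg
    rw [himg, Int.card_Icc] at this
    have hmM : m ≤ M := Finset.min'_le _ M (Finset.max'_mem _ himgne)
    omega
  have htl : tileLevel t = m := by
    rw [tileLevel, ← Finset.coe_min' himgne]
    rfl
  rw [htl]
  by_cases hcase : m ≤ ℓ ∧ ℓ < m + n
  · rw [if_pos hcase]
    have : ℓ ∈ Finset.Icc m M := Finset.mem_Icc.2 (by omega)
    rw [← himg] at this
    obtain ⟨s, hs, hsv⟩ := Finset.mem_image.1 this
    rw [Finset.card_eq_one]
    refine ⟨s, ?_⟩
    ext x
    simp only [Finset.mem_filter, Finset.mem_singleton]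
    constructor
    · rintro ⟨hx, hxv⟩
      exact hinj x hx s hs (by omega)
    · rintro rfl
      exact ⟨hs, hsv⟩
  · rw [if_neg hcase, Finset.card_eq_zero]
    rw [Finset.filter_eq_empty_iff]
    intro s hs hsv
    have : s.1 + s.2 ∈ Finset.Icc m M := by
      rw [← himg]; exact Finset.mem_image.2 ⟨s, hs, rfl⟩
    rw [Finset.mem_Icc] at this
    omega

lemma tiling_filter_card {n : ℕ} {R : Finset Square} {α : Finset (Finset Square)}
    (hα : IsRibbonTiling n R α) (P : Square → Prop) [DecidablePred P] :
    (R.filter P).card = ∑ t ∈ α, (t.filter P).card := by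
  rw [← Finset.card_biUnion]
  · congr 1
    ext s
    simp only [Finset.mem_biUnion, Finset.mem_filter]
    constructor
    · rintro ⟨hsR, hP⟩
      obtain ⟨u, ⟨huα, hsu⟩, -⟩ := hα.2.2 s hsR
      exact ⟨u, huα, hsu, hP⟩
    · rintro ⟨u, huα, hsu, hP⟩
      exact ⟨hα.2.1 u huα hsu, hP⟩
  · intro t₁ h₁ t₂ h₂ hne
    apply Finset.disjoint_filter_filter
    rw [Finset.disjoint_left]
    intro s hs1 hs2
    have hsR := hα.2.1 t₁ h₁ hs1
    obtain ⟨u, -, huniq⟩ := hα.2.2 s hsR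
    exact hne ((huniq t₁ ⟨h₁, hs1⟩).trans (huniq t₂ ⟨h₂, hs2⟩).symm)

/-- number of tiles of level `c` -/
def levelCount (α : Finset (Finset Square)) (c : ℤ) : ℕ :=
  (α.filter fun t => tileLevel t = c).card

lemma tiling_level_sum {n : ℕ} (hn : 1 ≤ n) {R : Finset Square} {α : Finset (Finset Square)}
    (hα : IsRibbonTiling n R α) (ℓ : ℤ) :
    (R.filter fun s => s.1 + s.2 = ℓ).card
      = ∑ c ∈ Finset.Icc (ℓ - n + 1) ℓ, levelCount α c := by
  rw [tiling_filter_card hα (fun s => s.1 + s.2 = ℓ)]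
  have : ∀ t ∈ α, (t.filter fun s => s.1 + s.2 = ℓ).card
      = if tileLevel t ≤ ℓ ∧ ℓ < tileLevel t + n then 1 else 0 := fun t ht =>
    ribbon_filter_card hn (hα.1 t ht) ℓ
  rw [Finset.sum_congr rfl this, ← Finset.sum_filter, Finset.sum_const, smul_eq_mul, mul_one]
  have hfib : (α.filter fun t => tileLevel t ≤ ℓ ∧ ℓ < tileLevel t + n).card
      = ∑ c ∈ Finset.Icc (ℓ - n + 1) ℓ,
        ((α.filter fun t => tileLevel t ≤ ℓ ∧ ℓ < tileLevel t + n).filter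
          fun t => tileLevel t = c).card := by
    apply Finset.card_eq_sum_card_fiberwise
    intro t ht
    rw [Finset.mem_coe, Finset.mem_filter] at ht
    rw [Finset.mem_coe, Finset.mem_Icc]
    omega
  rw [hfib]
  apply Finset.sum_congr rfl
  intro c hc
  rw [Finset.mem_Icc] at hc
  rw [Finset.filter_filter]
  unfold levelCount
  congr 1
  apply Finset.filter_congr
  intro t ht
  constructor
  · rintro ⟨-, h⟩; exact h
  · rintro rfl; exact ⟨⟨by omega, by omega⟩, rfl⟩

lemma levelCount_vanish {n : ℕ} (hn : 1 ≤ n) {R : Finset Square} (hR : R.Nonempty)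
    {α : Finset (Finset Square)} (hα : IsRibbonTiling n R α) {c : ℤ}
    (hc : c < (R.image fun s : Square => s.1 + s.2).min' (hR.image _)) :
    levelCount α c = 0 := by
  rw [levelCount, Finset.card_eq_zero, Finset.filter_eq_empty_iff]
  intro t ht htl
  have hne : t.Nonempty := by
    rw [← Finset.card_pos, (hα.1 t ht).2.1]; omega
  have himgne : (t.image fun s : Square => s.1 + s.2).Nonempty := hne.image _
  have htl' : tileLevel t = (t.image fun s : Square => s.1 + s.2).min' himgne := by
    rw [tileLevel, ← Finset.coe_min' himgne]; rfl
  obtain ⟨a, ha, hav⟩ := Finset.mem_image.1 (Finset.min'_mem _ himgne)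
  have hav' : a.1 + a.2 = tileLevel t := by rw [htl']; exact hav
  have haR : a ∈ R := hα.2.1 t ht ha
  have : (R.image fun s : Square => s.1 + s.2).min' (hR.image _) ≤ a.1 + a.2 :=
    Finset.min'_le _ _ (Finset.mem_image.2 ⟨a, haR, rfl⟩)
  omega

lemma levelCount_eq {n : ℕ} (hn : 1 ≤ n) {R : Finset Square} (hR : R.Nonempty)
    {α β : Finset (Finset Square)} (hα : IsRibbonTiling n R α) (hβ : IsRibbonTiling n R β)
    (c : ℤ) : levelCount α c = levelCount β c := by
  set m := (R.image fun s : Square => s.1 + s.2).min' (hR.image _) with hm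
  have key : ∀ k : ℕ, levelCount α (m + k) = levelCount β (m + k) := by
    intro k
    induction k using Nat.strong_induction_on with
    | _ k ih =>
      have hA := tiling_level_sum hn hα (m + k)
      have hB := tiling_level_sum hn hβ (m + k)
      have hsplit : ∀ γ : Finset (Finset Square),
          ∑ c ∈ Finset.Icc (m + (k:ℤ) - n + 1) (m + k), levelCount γ c
          = levelCount γ (m + k)
            + ∑ c ∈ Finset.Icc (m + (k:ℤ) - n + 1) (m + k - 1), levelCount γ c := by
        intro γ
        have hins : Finset.Icc (m + (k:ℤ) - n + 1) (m + k)
            = insert (m + (k:ℤ)) (Finset.Icc (m + (k:ℤ) - n + 1) (m + k - 1)) := by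
          ext x
          simp only [Finset.mem_Icc, Finset.mem_insert]
          omega
        rw [hins, Finset.sum_insert (by simp only [Finset.mem_Icc]; omega)]
      have heqsum : ∑ c ∈ Finset.Icc (m + (k:ℤ) - n + 1) (m + k - 1), levelCount α c
          = ∑ c ∈ Finset.Icc (m + (k:ℤ) - n + 1) (m + k - 1), levelCount β c := by
        apply Finset.sum_congr rfl
        intro c hc
        rw [Finset.mem_Icc] at hc
        rcases lt_or_ge c m with h | h
        · rw [levelCount_vanish hn hR hα h, levelCount_vanish hn hR hβ h]
        · have hck : c = m + ((c - m).toNat : ℤ) := by omega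
          have hlt : (c - m).toNat < k := by omega
          rw [hck]
          exact ih _ hlt
      rw [hsplit α] at hA
      rw [hsplit β] at hB
      omega
  rcases lt_or_ge c m with h | h
  · rw [levelCount_vanish hn hR hα h, levelCount_vanish hn hR hβ h]
  · have hck : c = m + ((c - m).toNat : ℤ) := by omega
    rw [hck]
    exact key _

/-- Any two order-`n` ribbon tilings of a simply connected
region `R` contain the same number of tiles of each level `c ∈ ℤ`. -/
theorem ribbon_tilings_same_level_counts
    (n : ℕ) (hn : 2 ≤ n) (R : Finset Square)
    (hreg : IsRegion R) (hsc : SimplyConnectedSq ↑R)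
    (α β : Finset (Finset Square))
    (hα : IsRibbonTiling n R α) (hβ : IsRibbonTiling n R β) :
    ∀ c : ℤ, {t : Finset Square | t ∈ α ∧ tileLevel t = c}.ncard
      = {t : Finset Square | t ∈ β ∧ tileLevel t = c}.ncard := by
  intro c
  have h1 : {t : Finset Square | t ∈ α ∧ tileLevel t = c}
      = ↑(α.filter fun t => tileLevel t = c) := by
    ext t; simp [Finset.mem_filter]
  have h2 : {t : Finset Square | t ∈ β ∧ tileLevel t = c}
      = ↑(β.filter fun t => tileLevel t = c) := by
    ext t; simp [Finset.mem_filter]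
  rw [h1, h2, Set.ncard_coe_finset, Set.ncard_coe_finset]
  exact levelCount_eq (by omega) hreg.1 hα hβ c
end

section
/- If α and β are order-n ribbon tilings of a simply connected region R such that G_R(α) = G_R(β) as orientations of G_R (that is, t_{c,i}(α) ≺ t_{d,j}(α) if and only if t_{c,i}(β) ≺ t_{d,j}(β) for all pairs of tile indices, and similarly for all edges involving boundary squares), then α = β. -/
/-! ### Auxiliary development -/

lemma sqPrec_iff (s t : Square) : sqPrec s t ↔
    ((t.1 + t.2 = s.1 + s.2 ∨ t.1 + t.2 = s.1 + s.2 + 1) ∧ s.1 < t.1) ∨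
    (t.1 + t.2 = s.1 + s.2 - 1 ∧ s.1 ≤ t.1) := by
  unfold sqPrec
  rw [abs_eq (by norm_num : (0:ℤ) ≤ 1)]
  omega

lemma sqAdj_lvl {p q : Square} (h : SqAdj p q) :
    q.1 + q.2 = p.1 + p.2 + 1 ∨ q.1 + q.2 = p.1 + p.2 - 1 := by
  unfold SqAdj at h; omega

lemma sqAdj_up {p q : Square} (h : SqAdj p q) (hl : q.1 + q.2 = p.1 + p.2 + 1) :
    q = (p.1 + 1, p.2) ∨ q = (p.1, p.2 + 1) := by
  have : q.1 = p.1 + 1 ∧ q.2 = p.2 ∨ q.1 = p.1 ∧ q.2 = p.2 + 1 := by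
    unfold SqAdj at h; omega
  rcases this with ⟨h1, h2⟩ | ⟨h1, h2⟩
  · exact Or.inl (Prod.ext h1 h2)
  · exact Or.inr (Prod.ext h1 h2)

/-- Structure of a ribbon tile: `g m` is the `x`-coordinate of its square at
level `m`. -/
structure TRep (n : ℕ) (t : Finset Square) (c : ℤ) (g : ℤ → ℤ) : Prop where
  hlvl : tileLevel t = c
  mem : ∀ m : ℤ, c ≤ m → m ≤ c + n - 1 → (g m, m - g m) ∈ t
  bounds : ∀ s ∈ t, c ≤ s.1 + s.2 ∧ s.1 + s.2 ≤ c + n - 1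
  xeq : ∀ s ∈ t, s.1 = g (s.1 + s.2)
  step : ∀ m : ℤ, c ≤ m → m + 1 ≤ c + n - 1 → g (m+1) = g m ∨ g (m+1) = g m + 1

lemma TRep.sq_eq {n : ℕ} {t : Finset Square} {c : ℤ} {g : ℤ → ℤ} (h : TRep n t c g) {s : Square} (hs : s ∈ t) :
    s = (g (s.1 + s.2), (s.1 + s.2) - g (s.1 + s.2)) := by
  have := h.xeq s hs
  exact Prod.ext this (by omega)

lemma TRep.level_inj {n : ℕ} {t : Finset Square} {c : ℤ} {g : ℤ → ℤ} (h : TRep n t c g) {s s' : Square} (hs : s ∈ t) (hs' : s' ∈ t)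
    (hl : s.1 + s.2 = s'.1 + s'.2) : s = s' := by
  rw [h.sq_eq hs, h.sq_eq hs', hl]

lemma rep_exists {n : ℕ} (hn : 2 ≤ n) {t : Finset Square} (ht : IsRibbonTile n t) :
    ∃ c g, TRep n t c g := by
  classical
  obtain ⟨hconn, hcard, hcol⟩ := ht
  have hnz : (0:ℤ) < (n:ℤ) := by exact_mod_cast Nat.lt_of_lt_of_le (by norm_num) hn
  -- level injectivity
  have hinj : ∀ a ∈ t, ∀ b ∈ t, a.1 + a.2 = b.1 + b.2 → a = b := by
    intro a ha b hb hab
    obtain ⟨s₀, -, hu⟩ := hcol ((a.1 + a.2) % n) (Int.emod_nonneg _ (by omega))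
      (Int.emod_lt_of_pos _ hnz)
    have h1 := hu a ⟨ha, rfl⟩
    have h2 := hu b ⟨hb, by rw [← hab]⟩
    rw [h1, h2]
  -- crossing lemma
  have cross : ∀ a b : Square,
      Relation.ReflTransGen
        (fun x y => x ∈ (↑t : Set Square) ∧ y ∈ (↑t : Set Square) ∧ SqAdj x y) a b →
      ∀ m : ℤ, a.1 + a.2 ≤ m → m < b.1 + b.2 →
      ∃ p q : Square, p ∈ t ∧ q ∈ t ∧ SqAdj p q ∧ p.1 + p.2 = m ∧ q.1 + q.2 = m + 1 := by
    intro a b h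
    induction h with
    | refl => intro m h1 h2; omega
    | @tail b c hab hbc ih =>
      intro m h1 h2
      obtain ⟨hbt, hct, hadj⟩ := hbc
      simp only [Finset.mem_coe] at hbt hct
      by_cases hb' : b.1 + b.2 ≤ m
      · have hlv := sqAdj_lvl hadj
        have h5 : b.1 + b.2 = m ∧ c.1 + c.2 = m + 1 := by omega
        exact ⟨b, c, hbt, hct, hadj, h5.1, h5.2⟩
      · exact ih m h1 (by omega)
  have hne : t.Nonempty := Finset.card_pos.mp (by omega)
  set L : Finset ℤ := t.image (fun s => s.1 + s.2) with hL
  have hLne : L.Nonempty := hne.image _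
  have hLcard : L.card = n := by
    rw [hL, Finset.card_image_of_injOn, hcard]
    intro a ha b hb hab
    exact hinj a ha b hb hab
  set c := L.min' hLne with hc
  set M := L.max' hLne with hM
  obtain ⟨a₀, ha₀t, ha₀⟩ := Finset.mem_image.mp (L.min'_mem hLne)
  obtain ⟨b₀, hb₀t, hb₀⟩ := Finset.mem_image.mp (L.max'_mem hLne)
  have hint : ∀ m : ℤ, c ≤ m → m ≤ M → m ∈ L := by
    intro m h1 h2
    rcases eq_or_lt_of_le h2 with h3 | h3
    · rw [h3]; exact L.max'_mem hLne
    · obtain ⟨p, q, hp, -, -, hpm, -⟩ :=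
        cross a₀ b₀ (hconn a₀ ha₀t b₀ hb₀t) m (by omega) (by omega)
      exact Finset.mem_image.mpr ⟨p, hp, hpm⟩
  have hLeq : L = Finset.Icc c M := by
    apply Finset.ext
    intro m
    constructor
    · intro hm
      exact Finset.mem_Icc.mpr ⟨L.min'_le m hm, L.le_max' m hm⟩
    · intro hm
      obtain ⟨h1, h2⟩ := Finset.mem_Icc.mp hm
      exact hint m h1 h2
  have hMc : M = c + n - 1 := by
    have h1 : c ≤ M := by
      have := L.min'_le M (L.max'_mem hLne); omega
    have h2 : (Finset.Icc c M).card = (M + 1 - c).toNat := Int.card_Icc c M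
    rw [← hLeq, hLcard] at h2
    omega
  have hex : ∀ m : ℤ, c ≤ m → m ≤ c + n - 1 → ∃ s, s ∈ t ∧ s.1 + s.2 = m := by
    intro m h1 h2
    obtain ⟨s, hs, hsm⟩ := Finset.mem_image.mp (hint m h1 (by omega))
    exact ⟨s, hs, hsm⟩
  classical
  refine ⟨c, fun m => if h : ∃ s, s ∈ t ∧ s.1 + s.2 = m then h.choose.1 else 0, ?_⟩
  have hg : ∀ m : ℤ, c ≤ m → m ≤ c + n - 1 →
      ((if h : ∃ s, s ∈ t ∧ s.1 + s.2 = m then h.choose.1 else 0 : ℤ),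
        m - (if h : ∃ s, s ∈ t ∧ s.1 + s.2 = m then h.choose.1 else 0)) ∈ t := by
    intro m h1 h2
    have hx := hex m h1 h2
    rw [dif_pos hx]
    obtain ⟨hst, hsl⟩ := hx.choose_spec
    have : hx.choose = (hx.choose.1, m - hx.choose.1) := Prod.ext rfl (by omega)
    rw [← this]; exact hst
  have hxeq : ∀ s ∈ t, s.1 = (if h : ∃ s', s' ∈ t ∧ s'.1 + s'.2 = s.1 + s.2
      then h.choose.1 else 0) := by
    intro s hs
    have hx : ∃ s', s' ∈ t ∧ s'.1 + s'.2 = s.1 + s.2 := ⟨s, hs, rfl⟩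
    rw [dif_pos hx]
    obtain ⟨hst, hsl⟩ := hx.choose_spec
    exact congrArg Prod.fst (hinj s hs hx.choose hst hsl.symm)
  refine ⟨?_, hg, ?_, hxeq, ?_⟩
  · -- tileLevel t = c
    unfold tileLevel
    rw [← hL, ← Finset.coe_min' hLne, ← hc]
    rfl
  · intro s hs
    have : s.1 + s.2 ∈ L := Finset.mem_image.mpr ⟨s, hs, rfl⟩
    have h1 := L.min'_le _ this
    have h2 := L.le_max' _ this
    omega
  · -- step
    intro m h1 h2
    have hpm := hg m h1 (by omega)
    have hqm := hg (m+1) (by omega) h2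
    set x1 : ℤ := (if h : ∃ s, s ∈ t ∧ s.1 + s.2 = m then h.choose.1 else 0)
    set x2 : ℤ := (if h : ∃ s, s ∈ t ∧ s.1 + s.2 = m + 1 then h.choose.1 else 0)
    obtain ⟨p, q, hp, hq, hadj, hpl, hql⟩ :=
      cross (x1, m - x1) (x2, m + 1 - x2) (hconn _ hpm _ hqm) m (by omega) (by omega)
    have hpe : p = (x1, m - x1) := hinj p hp _ hpm (by omega)
    have hqe : q = (x2, m + 1 - x2) := hinj q hq _ hqm (by omega)
    rw [hpe, hqe] at hadj
    rcases sqAdj_up hadj (by omega) with h | h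
    · right; have := congrArg Prod.fst h; simpa using this
    · left; have := congrArg Prod.fst h; simpa using this

lemma noCross {n : ℕ} {t₁ t₂ : Finset Square} {c₁ c₂ : ℤ} {g₁ g₂ : ℤ → ℤ}
    (h₁ : TRep n t₁ c₁ g₁) (h₂ : TRep n t₂ c₂ g₂)
    (hdis : ∀ s : Square, s ∈ t₁ → s ∈ t₂ → False)
    (m₀ : ℤ) (hc₁ : c₁ ≤ m₀) (hc₂ : c₂ ≤ m₀) (hbase : g₁ m₀ < g₂ m₀) :
    ∀ m, m₀ ≤ m → m ≤ c₁ + n - 1 → m ≤ c₂ + n - 1 → g₁ m < g₂ m := by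
  refine Int.le_induction ?_ ?_
  · intro _ _; exact hbase
  · intro k hk ih hk1 hk2
    have ih' := ih (by omega) (by omega)
    have hs1 := h₁.step k (by omega) (by omega)
    have hs2 := h₂.step k (by omega) (by omega)
    have hle : g₁ (k+1) ≤ g₂ (k+1) := by omega
    rcases eq_or_lt_of_le hle with he | hlt
    · exfalso
      refine hdis (g₁ (k+1), (k+1) - g₁ (k+1)) (h₁.mem (k+1) (by omega) hk1) ?_
      rw [he]
      exact h₂.mem (k+1) (by omega) hk2
    · exact hlt

lemma not_prec_right {n : ℕ} {t t' : Finset Square} {c c' : ℤ} {g g' : ℤ → ℤ}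
    (h : TRep n t c g) (h' : TRep n t' c' g')
    (hcc' : c ≤ c') (htop : c' ≤ c + n - 1)
    (hlt : ∀ m, c' ≤ m → m ≤ c + n - 1 → g m < g' m) :
    ¬ TilePrec t' t := by
  rintro ⟨s₁, hs₁, s₂, hs₂, hp⟩
  obtain ⟨hb₁l, hb₁u⟩ := h'.bounds s₁ hs₁
  obtain ⟨hb₂l, hb₂u⟩ := h.bounds s₂ hs₂
  have hx₁ := h'.xeq s₁ hs₁
  have hx₂ := h.xeq s₂ hs₂
  set m := s₁.1 + s₁.2 with hm
  set m' := s₂.1 + s₂.2 with hm'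
  rw [sqPrec_iff] at hp
  rcases hp with ⟨hl, hx⟩ | ⟨hl, hx⟩
  · rcases hl with hl | hl
    · -- m' = m
      have h3 : m' = m := by omega
      have := hlt m (by omega) (by omega)
      rw [h3] at hx₂
      omega
    · -- m' = m + 1
      have h1 := h.step m (by omega) (by omega)
      have h2 := hlt m (by omega) (by omega)
      have h3 : m' = m + 1 := by omega
      rw [h3] at hx₂
      omega
  · -- m' = m - 1
    have h3 : m' = m - 1 := by omega
    by_cases hm1 : c' ≤ m - 1
    · have h1 := hlt (m-1) hm1 (by omega)
      have h2 := h'.step (m-1) (by omega) (by omega)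
      have h4 : m - 1 + 1 = m := by ring
      rw [h4] at h2
      rw [h3] at hx₂
      omega
    · have hmc : m = c' := by omega
      have hcc : c < c' := by omega
      have h1 := hlt c' le_rfl htop
      have h2 := h.step (c'-1) (by omega) (by omega)
      have h4 : c' - 1 + 1 = c' := by ring
      rw [h4] at h2
      rw [h3, hmc] at hx₂
      rw [hmc] at hx₁
      omega

noncomputable def tileOf (γ : Finset (Finset Square)) (s : Square) : Finset Square :=
  if h : ∃ t ∈ γ, s ∈ t then h.choose else ∅

lemma tileOf_spec {n : ℕ} {R : Finset Square} {γ : Finset (Finset Square)}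
    (hγ : IsRibbonTiling n R γ) {s : Square} (hs : s ∈ R) :
    tileOf γ s ∈ γ ∧ s ∈ tileOf γ s := by
  obtain ⟨u, ⟨hu1, hu2⟩, -⟩ := hγ.2.2 s hs
  have h : ∃ t ∈ γ, s ∈ t := ⟨u, hu1, hu2⟩
  rw [tileOf, dif_pos h]
  exact ⟨h.choose_spec.1, h.choose_spec.2⟩

lemma tileOf_eq {n : ℕ} {R : Finset Square} {γ : Finset (Finset Square)}
    (hγ : IsRibbonTiling n R γ) {t : Finset Square} (ht : t ∈ γ) {s : Square} (hs : s ∈ t) :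
    tileOf γ s = t := by
  have hsR : s ∈ R := hγ.2.1 t ht hs
  obtain ⟨u, -, hu⟩ := hγ.2.2 s hsR
  obtain ⟨h1, h2⟩ := tileOf_spec hγ hsR
  rw [hu (tileOf γ s) ⟨h1, h2⟩, hu t ⟨ht, hs⟩]

lemma tiles_disjoint {n : ℕ} {R : Finset Square} {γ : Finset (Finset Square)}
    (hγ : IsRibbonTiling n R γ) {t t' : Finset Square} (ht : t ∈ γ) (ht' : t' ∈ γ)
    (hne : t ≠ t') : ∀ s : Square, s ∈ t → s ∈ t' → False := by
  intro s hs hs'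
  have := (tileOf_eq hγ ht hs).symm.trans (tileOf_eq hγ ht' hs')
  exact hne this

open scoped Classical

lemma sqPrec_mk {l₁ l₂ x₁ x₂ : ℤ}
    (h : ((l₂ = l₁ ∨ l₂ = l₁ + 1) ∧ x₁ < x₂) ∨ (l₂ = l₁ - 1 ∧ x₁ ≤ x₂)) :
    sqPrec (x₁, l₁ - x₁) (x₂, l₂ - x₂) := by
  rw [sqPrec_iff]
  show ((x₂ + (l₂ - x₂) = x₁ + (l₁ - x₁) ∨ x₂ + (l₂ - x₂) = x₁ + (l₁ - x₁) + 1) ∧ x₁ < x₂) ∨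
    (x₂ + (l₂ - x₂) = x₁ + (l₁ - x₁) - 1 ∧ x₁ ≤ x₂)
  omega

noncomputable def rk (γ : Finset (Finset Square)) (t : Finset Square) : ℕ :=
  (γ.filter (fun t' => t' ≠ t ∧ tileLevel t' = tileLevel t ∧ TilePrec t' t)).card

noncomputable def Ncount (γ : Finset (Finset Square)) (l : ℤ) : ℕ :=
  (γ.filter (fun t' => tileLevel t' = l)).card

lemma isNthTile_iff (γ : Finset (Finset Square)) (c : ℤ) (i : ℕ) (t : Finset Square) :
    IsNthTile γ c i t ↔ (t ∈ γ ∧ tileLevel t = c ∧ rk γ t = i) := by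
  have hset : tileLevel t = c →
      {t' : Finset Square | t' ∈ γ ∧ t' ≠ t ∧ tileLevel t' = c ∧ TilePrec t' t}.ncard
        = rk γ t := by
    intro hc
    have hEq : {t' : Finset Square | t' ∈ γ ∧ t' ≠ t ∧ tileLevel t' = c ∧ TilePrec t' t}
        = ↑(γ.filter (fun t' => t' ≠ t ∧ tileLevel t' = tileLevel t ∧ TilePrec t' t)) := by
      ext t'
      simp only [Finset.coe_filter, Set.mem_setOf_eq, hc]
      try tauto
    rw [hEq, Set.ncard_coe_finset]
    rfl
  unfold IsNthTile
  constructor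
  · rintro ⟨h1, h2, h3⟩; exact ⟨h1, h2, by rw [← hset h2]; exact h3⟩
  · rintro ⟨h1, h2, h3⟩; exact ⟨h1, h2, by rw [hset h2]; exact h3⟩

lemma rep_mem {n : ℕ} {R : Finset Square} {γ : Finset (Finset Square)} (hn : 2 ≤ n)
    (hγ : IsRibbonTiling n R γ) {t : Finset Square} (ht : t ∈ γ) :
    ∃ g, TRep n t (tileLevel t) g := by
  obtain ⟨c, g, h⟩ := rep_exists hn (hγ.1 t ht)
  rw [h.hlvl]
  exact ⟨g, h⟩

def RootLt (l x₀ : ℤ) (t' : Finset Square) : Prop := ∃ q ∈ t', q.1 + q.2 = l ∧ q.1 < x₀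

lemma rk_eq_card {n : ℕ} {R : Finset Square} {γ : Finset (Finset Square)} (hn : 2 ≤ n)
    (hγ : IsRibbonTiling n R γ) {t : Finset Square} {l : ℤ} {g : ℤ → ℤ}
    (ht : t ∈ γ) (h : TRep n t l g) :
    rk γ t = (γ.filter (fun t' => tileLevel t' = l ∧ RootLt l (g l) t')).card := by
  have hnn : (2:ℤ) ≤ (n:ℤ) := by exact_mod_cast hn
  unfold rk
  congr 1
  apply Finset.filter_congr
  intro t' ht'
  obtain ⟨g', h'⟩ := rep_mem hn hγ ht'
  constructor
  · rintro ⟨hne, hl, hp⟩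
    rw [h.hlvl] at hl
    have h'' : TRep n t' l g' := by rw [hl] at h'; exact h'
    refine ⟨hl, ?_⟩
    rcases lt_trichotomy (g' l) (g l) with hc | hc | hc
    · exact ⟨(g' l, l - g' l), h''.mem l le_rfl (by omega), by omega, by simpa using hc⟩
    · exfalso
      refine tiles_disjoint hγ ht ht' (Ne.symm hne) (g l, l - g l)
        (h.mem l le_rfl (by omega)) ?_
      rw [← hc]
      exact h''.mem l le_rfl (by omega)
    · exact absurd hp (not_prec_right h h'' le_rfl (by omega)
        (fun m hm1 hm2 => noCross h h'' (tiles_disjoint hγ ht ht' (Ne.symm hne))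
          l le_rfl le_rfl hc m hm1 hm2 (by omega)))
  · rintro ⟨hl, q, hq, hql, hqx⟩
    have h'' : TRep n t' l g' := by rw [hl] at h'; exact h'
    have hq1 : q.1 = g' l := by have := h''.xeq q hq; rw [hql] at this; exact this
    have hroot : g' l < g l := by omega
    have hne : t' ≠ t := by
      rintro rfl
      have := h.xeq q hq; rw [hql] at this; omega
    refine ⟨hne, by rw [h.hlvl]; exact hl, ?_⟩
    exact ⟨(g' l, l - g' l), h''.mem l le_rfl (by omega),
      (g l, l - g l), h.mem l le_rfl (by omega),
      sqPrec_mk (Or.inl ⟨Or.inl rfl, hroot⟩)⟩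

lemma rk_lt_count {γ : Finset (Finset Square)} {t : Finset Square} (ht : t ∈ γ) :
    rk γ t < Ncount γ (tileLevel t) := by
  unfold rk Ncount
  apply Finset.card_lt_card
  rw [Finset.ssubset_iff_of_subset (Finset.monotone_filter_right γ ?_)]
  · exact ⟨t, Finset.mem_filter.mpr ⟨ht, rfl⟩, by simp⟩
  · intro t' _ h
    exact h.2.1

lemma rk_lt_of_root_lt {n : ℕ} {R : Finset Square} {γ : Finset (Finset Square)} (hn : 2 ≤ n)
    (hγ : IsRibbonTiling n R γ) {t₁ t₂ : Finset Square} {l : ℤ} {g₁ g₂ : ℤ → ℤ}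
    (ht₁ : t₁ ∈ γ) (ht₂ : t₂ ∈ γ) (h₁ : TRep n t₁ l g₁) (h₂ : TRep n t₂ l g₂)
    (hroot : g₁ l < g₂ l) : rk γ t₁ < rk γ t₂ := by
  have hnn : (2:ℤ) ≤ (n:ℤ) := by exact_mod_cast hn
  rw [rk_eq_card hn hγ ht₁ h₁, rk_eq_card hn hγ ht₂ h₂]
  apply Finset.card_lt_card
  rw [Finset.ssubset_iff_of_subset (Finset.monotone_filter_right γ ?_)]
  · refine ⟨t₁, Finset.mem_filter.mpr ⟨ht₁, h₁.hlvl,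
      ⟨(g₁ l, l - g₁ l), h₁.mem l le_rfl (by omega), by omega, by simpa using hroot⟩⟩, ?_⟩
    intro hmem
    obtain ⟨-, -, q, hq, hql, hqx⟩ := Finset.mem_filter.mp hmem
    have := h₁.xeq q hq
    rw [hql] at this
    omega
  · rintro t' - ⟨hl, q, hq, hql, hqx⟩
    exact ⟨hl, q, hq, hql, by omega⟩

lemma root_eq_of_eq {n : ℕ} {R : Finset Square} {γ : Finset (Finset Square)} (hn : 2 ≤ n)
    (hγ : IsRibbonTiling n R γ) {t₁ t₂ : Finset Square} {l : ℤ} {g₁ g₂ : ℤ → ℤ}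
    (ht₁ : t₁ ∈ γ) (ht₂ : t₂ ∈ γ) (h₁ : TRep n t₁ l g₁) (h₂ : TRep n t₂ l g₂)
    (hroot : g₁ l = g₂ l) : t₁ = t₂ := by
  have hnn : (2:ℤ) ≤ (n:ℤ) := by exact_mod_cast hn
  by_contra hne
  refine tiles_disjoint hγ ht₁ ht₂ hne (g₁ l, l - g₁ l) (h₁.mem l le_rfl (by omega)) ?_
  rw [hroot]
  exact h₂.mem l le_rfl (by omega)

lemma rk_inj {n : ℕ} {R : Finset Square} {γ : Finset (Finset Square)} (hn : 2 ≤ n)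
    (hγ : IsRibbonTiling n R γ) {t₁ t₂ : Finset Square}
    (ht₁ : t₁ ∈ γ) (ht₂ : t₂ ∈ γ) (hl : tileLevel t₁ = tileLevel t₂)
    (hr : rk γ t₁ = rk γ t₂) : t₁ = t₂ := by
  obtain ⟨g₁, h₁⟩ := rep_mem hn hγ ht₁
  obtain ⟨g₂, h₂'⟩ := rep_mem hn hγ ht₂
  have h₂ : TRep n t₂ (tileLevel t₁) g₂ := by rw [hl]; exact h₂'
  rcases lt_trichotomy (g₁ (tileLevel t₁)) (g₂ (tileLevel t₁)) with hc | hc | hc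
  · exact absurd hr (Nat.ne_of_lt (rk_lt_of_root_lt hn hγ ht₁ ht₂ h₁ h₂ hc))
  · exact root_eq_of_eq hn hγ ht₁ ht₂ h₁ h₂ hc
  · exact absurd hr.symm (Nat.ne_of_lt (rk_lt_of_root_lt hn hγ ht₂ ht₁ h₂ h₁ hc))

lemma rk_surj {n : ℕ} {R : Finset Square} {γ : Finset (Finset Square)} (hn : 2 ≤ n)
    (hγ : IsRibbonTiling n R γ) (l : ℤ) (j : ℕ) (hj : j < Ncount γ l) :
    ∃ t ∈ γ, tileLevel t = l ∧ rk γ t = j := by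
  set S := γ.filter (fun t' => tileLevel t' = l) with hS
  have hinj : ∀ t₁ ∈ S, ∀ t₂ ∈ S, rk γ t₁ = rk γ t₂ → t₁ = t₂ := by
    intro t₁ h1 t₂ h2 hr
    obtain ⟨h1g, h1l⟩ := Finset.mem_filter.mp h1
    obtain ⟨h2g, h2l⟩ := Finset.mem_filter.mp h2
    exact rk_inj hn hγ h1g h2g (h1l.trans h2l.symm) hr
  have himg : S.image (rk γ) = Finset.range S.card := by
    apply Finset.eq_of_subset_of_card_le
    · intro i hi
      obtain ⟨t', ht', rfl⟩ := Finset.mem_image.mp hi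
      rw [Finset.mem_range]
      obtain ⟨h1g, h1l⟩ := Finset.mem_filter.mp ht'
      have := rk_lt_count h1g
      rw [h1l] at this
      exact this
    · rw [Finset.card_range, Finset.card_image_of_injOn hinj]
  have hjm : j ∈ Finset.range S.card := Finset.mem_range.mpr hj
  rw [← himg] at hjm
  obtain ⟨t', ht', hrk⟩ := Finset.mem_image.mp hjm
  obtain ⟨h1g, h1l⟩ := Finset.mem_filter.mp ht'
  exact ⟨t', h1g, h1l, hrk⟩

lemma card_tiles_left_eq {n : ℕ} {R : Finset Square} {γ δ : Finset (Finset Square)} (hn : 2 ≤ n)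
    (hγ : IsRibbonTiling n R γ) (hδ : IsRibbonTiling n R δ) (l x₀ : ℤ)
    (H : ∀ q ∈ R, q.1 + q.2 = l → q.1 < x₀ →
      tileLevel (tileOf γ q) = tileLevel (tileOf δ q)) :
    (γ.filter (fun t' => tileLevel t' = l ∧ RootLt l x₀ t')).card
      = (δ.filter (fun t' => tileLevel t' = l ∧ RootLt l x₀ t')).card := by
  have key : ∀ (γ' : Finset (Finset Square)), IsRibbonTiling n R γ' →
      (γ'.filter (fun t' => tileLevel t' = l ∧ RootLt l x₀ t')).card
        = (R.filter (fun q => q.1 + q.2 = l ∧ q.1 < x₀ ∧ tileLevel (tileOf γ' q) = l)).card := by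
    intro γ' hγ'
    symm
    apply Finset.card_bij (fun q _ => tileOf γ' q)
    · intro q hq
      obtain ⟨hqR, hql, hqx, hqt⟩ := Finset.mem_filter.mp hq
      obtain ⟨hT1, hT2⟩ := tileOf_spec hγ' hqR
      exact Finset.mem_filter.mpr ⟨hT1, hqt, q, hT2, hql, hqx⟩
    · intro q₁ hq₁ q₂ hq₂ heq
      obtain ⟨hq₁R, hq₁l, -, -⟩ := Finset.mem_filter.mp hq₁
      obtain ⟨hq₂R, hq₂l, -, -⟩ := Finset.mem_filter.mp hq₂
      obtain ⟨hT1, hT2⟩ := tileOf_spec hγ' hq₁R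
      obtain ⟨hU1, hU2⟩ := tileOf_spec hγ' hq₂R
      obtain ⟨g, hrep⟩ := rep_mem hn hγ' hT1
      rw [← heq] at hU2
      exact hrep.level_inj hT2 hU2 (by omega)
    · intro t' ht'
      obtain ⟨ht'g, ht'l, q, hq, hql, hqx⟩ := Finset.mem_filter.mp ht'
      have hqR : q ∈ R := hγ'.2.1 t' ht'g hq
      have : tileOf γ' q = t' := tileOf_eq hγ' ht'g hq
      exact ⟨q, Finset.mem_filter.mpr ⟨hqR, hql, hqx, by rw [this]; exact ht'l⟩, this⟩
  have hQ : R.filter (fun q => q.1 + q.2 = l ∧ q.1 < x₀ ∧ tileLevel (tileOf γ q) = l)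
      = R.filter (fun q => q.1 + q.2 = l ∧ q.1 < x₀ ∧ tileLevel (tileOf δ q) = l) := by
    apply Finset.filter_congr
    intro q hq
    constructor
    · rintro ⟨h1, h2, h3⟩; exact ⟨h1, h2, by rw [← H q hq h1 h2]; exact h3⟩
    · rintro ⟨h1, h2, h3⟩; exact ⟨h1, h2, by rw [H q hq h1 h2]; exact h3⟩
  rw [key γ hγ, key δ hδ, hQ]

lemma count_level_squares {n : ℕ} {R : Finset Square} {γ : Finset (Finset Square)} (hn : 2 ≤ n)
    (hγ : IsRibbonTiling n R γ) (m : ℤ) :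
    (R.filter (fun s => s.1 + s.2 = m)).card
      = ∑ c ∈ Finset.Icc (m - n + 1) m, Ncount γ c := by
  classical
  have hbi : R.filter (fun s => s.1 + s.2 = m)
      = γ.biUnion (fun t => t.filter (fun s => s.1 + s.2 = m)) := by
    ext s
    simp only [Finset.mem_filter, Finset.mem_biUnion]
    constructor
    · rintro ⟨hsR, hsl⟩
      obtain ⟨t, ⟨ht, hst⟩, -⟩ := hγ.2.2 s hsR
      exact ⟨t, ht, hst, hsl⟩
    · rintro ⟨t, ht, hst, hsl⟩
      exact ⟨hγ.2.1 t ht hst, hsl⟩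
  rw [hbi, Finset.card_biUnion]
  swap
  · intro t₁ h₁ t₂ h₂ hne
    apply Finset.disjoint_left.mpr
    intro s hs₁ hs₂
    exact (tiles_disjoint hγ h₁ h₂ hne s (Finset.mem_filter.mp hs₁).1
      (Finset.mem_filter.mp hs₂).1).elim
  have hterm : ∀ t ∈ γ, (t.filter (fun s => s.1 + s.2 = m)).card
      = if tileLevel t ∈ Finset.Icc (m - (n:ℤ) + 1) m then 1 else 0 := by
    intro t ht
    obtain ⟨g, h⟩ := rep_mem hn hγ ht
    by_cases hc : tileLevel t ∈ Finset.Icc (m - (n:ℤ) + 1) m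
    · rw [if_pos hc]
      obtain ⟨h1, h2⟩ := Finset.mem_Icc.mp hc
      rw [Finset.card_eq_one]
      refine ⟨(g m, m - g m), ?_⟩
      ext s
      simp only [Finset.mem_filter, Finset.mem_singleton]
      constructor
      · rintro ⟨hst, hsl⟩
        rw [h.sq_eq hst, hsl]
      · rintro rfl
        exact ⟨h.mem m (by omega) (by omega), by show g m + (m - g m) = m; ring⟩
    · rw [if_neg hc]
      rw [Finset.card_eq_zero, Finset.filter_eq_empty_iff]
      intro s hs
      have := h.bounds s hs
      rw [Finset.mem_Icc] at hc
      omega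
  rw [Finset.sum_congr rfl hterm]
  have hfib : (γ.filter (fun t => tileLevel t ∈ Finset.Icc (m - (n:ℤ) + 1) m)).card
      = ∑ c ∈ Finset.Icc (m - (n:ℤ) + 1) m, Ncount γ c := by
    unfold Ncount
    rw [Finset.card_eq_sum_card_fiberwise
      (s := γ.filter (fun t => tileLevel t ∈ Finset.Icc (m - (n:ℤ) + 1) m))
      (f := tileLevel) (t := Finset.Icc (m - (n:ℤ) + 1) m)
      (fun t htf => (Finset.mem_filter.mp htf).2)]
    apply Finset.sum_congr rfl
    intro c hc
    congr 1
    ext t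
    simp only [Finset.mem_filter]
    constructor
    · rintro ⟨⟨h1, h2⟩, h3⟩; exact ⟨h1, h3⟩
    · rintro ⟨h1, h3⟩; exact ⟨⟨h1, by rw [h3]; exact hc⟩, h3⟩
  rw [← hfib, ← Finset.card_filter]

lemma Ncount_congr {n : ℕ} {R : Finset Square} {γ δ : Finset (Finset Square)} (hn : 2 ≤ n)
    (hγ : IsRibbonTiling n R γ) (hδ : IsRibbonTiling n R δ) (hR : R.Nonempty) :
    ∀ m, Ncount γ m = Ncount δ m := by
  classical
  have hRim : (R.image (fun s : Square => s.1 + s.2)).Nonempty := hR.image _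
  set m₀ := (R.image (fun s : Square => s.1 + s.2)).min' hRim with hm₀
  have hzero : ∀ (γ' : Finset (Finset Square)), IsRibbonTiling n R γ' →
      ∀ m, m < m₀ → Ncount γ' m = 0 := by
    intro γ' hγ' m hm
    rw [Ncount, Finset.card_eq_zero, Finset.filter_eq_empty_iff]
    intro t ht hlv
    obtain ⟨g, h⟩ := rep_mem hn hγ' ht
    have hmem := h.mem (tileLevel t) le_rfl (by omega)
    have hR' : (g (tileLevel t), tileLevel t - g (tileLevel t)) ∈ R := hγ'.2.1 t ht hmem
    have h2 := Finset.min'_le (R.image (fun s : Square => s.1 + s.2)) (tileLevel t)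
      (Finset.mem_image.mpr ⟨_, hR', by show g _ + (_ - g _) = _; ring⟩)
    omega
  have hrec : ∀ m, (∀ k, k < m → Ncount γ k = Ncount δ k) → Ncount γ m = Ncount δ m := by
    intro m ih
    have e1 := count_level_squares hn hγ m
    have e2 := count_level_squares hn hδ m
    have hsplit : Finset.Icc (m - (n:ℤ) + 1) m = insert m (Finset.Icc (m - (n:ℤ) + 1) (m-1)) := by
      ext k; simp only [Finset.mem_Icc, Finset.mem_insert]; omega
    have hnotm : m ∉ Finset.Icc (m - (n:ℤ) + 1) (m-1) := by
      simp only [Finset.mem_Icc]; omega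
    rw [hsplit, Finset.sum_insert hnotm] at e1 e2
    have hsum : ∑ c ∈ Finset.Icc (m - (n:ℤ) + 1) (m-1), Ncount γ c
        = ∑ c ∈ Finset.Icc (m - (n:ℤ) + 1) (m-1), Ncount δ c :=
      Finset.sum_congr rfl (fun c hc => ih c (by
        have := (Finset.mem_Icc.mp hc).2; omega))
    omega
  have main : ∀ k : ℕ, ∀ m : ℤ, m < m₀ + k → Ncount γ m = Ncount δ m := by
    intro k
    induction k with
    | zero => intro m hm; rw [hzero γ hγ m (by omega), hzero δ hδ m (by omega)]
    | succ k ih =>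
      intro m hm
      by_cases h : m < m₀ + k
      · exact ih m h
      · exact hrec m (fun k' hk' => ih k' (by omega))
  intro m
  exact main (m - m₀ + 1).toNat m (by omega)

def GoodAt (γ δ : Finset (Finset Square)) (q : Square) : Prop :=
  tileLevel (tileOf γ q) = tileLevel (tileOf δ q) ∧ rk γ (tileOf γ q) = rk δ (tileOf δ q)

lemma GoodAt.symm {γ δ : Finset (Finset Square)} {q : Square} (h : GoodAt γ δ q) :
    GoodAt δ γ q := ⟨h.1.symm, h.2.symm⟩

def Orient (γ δ : Finset (Finset Square)) : Prop :=
  ∀ (c d : ℤ) (i j : ℕ) (ta tb ua ub : Finset Square),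
    IsNthTile γ c i ta → IsNthTile γ d j tb →
    IsNthTile δ c i ua → IsNthTile δ d j ub →
    (TilePrec ta tb ↔ TilePrec ua ub)

lemma Orient.symm {γ δ : Finset (Finset Square)} (h : Orient γ δ) : Orient δ γ :=
  fun c d i j ta tb ua ub h1 h2 h3 h4 => (h c d i j ua ub ta tb h3 h4 h1 h2).symm

/-- Key step: if the `γ`-tile of a "minimal bad square" `s` moved right into
`s` (i.e. contains the square directly to the left of `s`), we get a
contradiction. -/
lemma K1 {n : ℕ} {R : Finset Square} {γ δ : Finset (Finset Square)} (hn : 2 ≤ n)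
    (hγ : IsRibbonTiling n R γ) (hδ : IsRibbonTiling n R δ) {s : Square} (hsR : s ∈ R)
    (hbad : ¬ GoodAt γ δ s)
    (Hlow : ∀ q ∈ R, q.1 + q.2 < s.1 + s.2 → GoodAt γ δ q)
    (Hleft : ∀ q ∈ R, q.1 + q.2 = s.1 + s.2 → q.1 < s.1 → GoodAt γ δ q)
    (hp : (s.1 - 1, s.2) ∈ tileOf γ s) : False := by
  classical
  obtain ⟨htγ, hst⟩ := tileOf_spec hγ hsR
  set t := tileOf γ s with hts
  set l := s.1 + s.2 with hl
  set p : Square := (s.1 - 1, s.2) with hpdef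
  have hp1 : p.1 = s.1 - 1 := rfl
  have hp2 : p.2 = s.2 := rfl
  have hplv : p.1 + p.2 = l - 1 := by omega
  obtain ⟨g, h⟩ := rep_mem hn hγ htγ
  set c₀ := tileLevel t with hc₀
  have hgl : g l = s.1 := by
    have := h.xeq s hst; rw [← hl] at this; exact this.symm
  have hpbounds := h.bounds p hp
  have hsbounds := h.bounds s hst
  have hc₀le : c₀ ≤ l - 1 := by omega
  have hltop : l ≤ c₀ + n - 1 := by omega
  -- p is good
  have hpR : p ∈ R := hγ.2.1 t htγ hp
  have hpgood : GoodAt γ δ p := Hlow p hpR (by omega)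
  obtain ⟨hu'δ, hpu'⟩ := tileOf_spec hδ hpR
  set u' := tileOf δ p with hu'def
  have htp : tileOf γ p = t := tileOf_eq hγ htγ hp
  obtain ⟨hpg1, hpg2⟩ := hpgood
  rw [htp] at hpg1 hpg2
  obtain ⟨g', h'0⟩ := rep_mem hn hδ hu'δ
  have h' : TRep n u' c₀ g' := by rw [hc₀, hpg1]; exact h'0
  have hg'm : g' (l - 1) = s.1 - 1 := by
    have := h'.xeq p hpu'
    rw [hplv] at this
    omega
  have hstep := h'.step (l-1) (by omega) (by omega)
  rw [show l - 1 + 1 = l from by ring, hg'm] at hstep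
  rcases hstep with hca | hca
  · -- u' continues to (s.1 - 1, s.2 + 1)
    set s' : Square := (s.1 - 1, l - (s.1 - 1)) with hs'def
    have hs'1 : s'.1 = s.1 - 1 := rfl
    have hs'2 : s'.2 = l - (s.1 - 1) := rfl
    have hs'mem : s' ∈ u' := by
      have := h'.mem l (by omega) (by omega)
      rw [hca] at this
      exact this
    have hs'R : s' ∈ R := hδ.2.1 u' hu'δ hs'mem
    obtain ⟨hs'g1, hs'g2⟩ := Hleft s' hs'R (by omega) (by omega)
    have htOf : tileOf δ s' = u' := tileOf_eq hδ hu'δ hs'mem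
    rw [htOf] at hs'g1 hs'g2
    have h1 : tileLevel (tileOf γ s') = tileLevel t := by rw [hs'g1, ← hpg1]
    have h2 : rk γ (tileOf γ s') = rk γ t := by rw [hs'g2, ← hpg2]
    have heq : tileOf γ s' = t :=
      rk_inj hn hγ (tileOf_spec hγ hs'R).1 htγ h1 h2
    have hs't : s' ∈ t := by rw [← heq]; exact (tileOf_spec hγ hs'R).2
    have hxx := h.xeq s' hs't
    rw [show s'.1 + s'.2 = l from by omega, hgl] at hxx
    omega
  · -- s ∈ u'
    rw [show s.1 - 1 + 1 = s.1 from by ring] at hca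
    have hsmem : s ∈ u' := by
      have := h'.mem l (by omega) (by omega)
      rw [hca] at this
      rw [show ((s.1, l - s.1) : Square) = s from Prod.ext rfl (by omega)] at this
      exact this
    have : tileOf δ s = u' := tileOf_eq hδ hu'δ hsmem
    exact hbad ⟨by rw [this]; exact hpg1, by rw [this]; exact hpg2⟩

/-- Key step: if `s` is the root of its tile in both tilings, the two tiles
have the same index, contradicting badness of `s`. -/
lemma K0 {n : ℕ} {R : Finset Square} {γ δ : Finset (Finset Square)} (hn : 2 ≤ n)
    (hγ : IsRibbonTiling n R γ) (hδ : IsRibbonTiling n R δ) {s : Square} (hsR : s ∈ R)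
    (hbad : ¬ GoodAt γ δ s)
    (Hleft : ∀ q ∈ R, q.1 + q.2 = s.1 + s.2 → q.1 < s.1 → GoodAt γ δ q)
    (hrootγ : tileLevel (tileOf γ s) = s.1 + s.2)
    (hrootδ : tileLevel (tileOf δ s) = s.1 + s.2) : False := by
  classical
  obtain ⟨htγ, hst⟩ := tileOf_spec hγ hsR
  obtain ⟨huδ, hsu⟩ := tileOf_spec hδ hsR
  set l := s.1 + s.2 with hl
  obtain ⟨g, h0⟩ := rep_mem hn hγ htγ
  obtain ⟨gu, hu0⟩ := rep_mem hn hδ huδ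
  have h : TRep n (tileOf γ s) l g := by rw [← hrootγ]; exact h0
  have hu : TRep n (tileOf δ s) l gu := by rw [← hrootδ]; exact hu0
  have hgl : g l = s.1 := by
    have := h.xeq s hst; rw [← hl] at this; exact this.symm
  have hgul : gu l = s.1 := by
    have := hu.xeq s hsu; rw [← hl] at this; exact this.symm
  have e1 := rk_eq_card hn hγ htγ h
  have e2 := rk_eq_card hn hδ huδ hu
  rw [hgl] at e1
  rw [hgul] at e2
  have e3 := card_tiles_left_eq hn hγ hδ l s.1
    (fun q hq h1 h2 => (Hleft q hq h1 h2).1)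
  refine hbad ⟨by rw [hrootγ, hrootδ], ?_⟩
  rw [e1, e2, e3]

/-- Key step: the `γ`-tile of `s` moved up into `s` from level `l - 1`, while
the `δ`-tile of `s` is rooted at `s`.  Here the orientation hypothesis is
used. -/
lemma K3 {n : ℕ} {R : Finset Square} {γ δ : Finset (Finset Square)} (hn : 2 ≤ n)
    (hγ : IsRibbonTiling n R γ) (hδ : IsRibbonTiling n R δ) (hRne : R.Nonempty)
    (Hor : Orient γ δ) {s : Square} (hsR : s ∈ R)
    (hbad : ¬ GoodAt γ δ s)
    (Hlow : ∀ q ∈ R, q.1 + q.2 < s.1 + s.2 → GoodAt γ δ q)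
    (Hleft : ∀ q ∈ R, q.1 + q.2 = s.1 + s.2 → q.1 < s.1 → GoodAt γ δ q)
    (hup : (s.1, s.2 - 1) ∈ tileOf γ s)
    (hrootδ : tileLevel (tileOf δ s) = s.1 + s.2) : False := by
  classical
  obtain ⟨htγ, hst⟩ := tileOf_spec hγ hsR
  obtain ⟨huδ, hsu⟩ := tileOf_spec hδ hsR
  set t := tileOf γ s with hts
  set u := tileOf δ s with hus
  set l := s.1 + s.2 with hl
  set p : Square := (s.1, s.2 - 1) with hpdef
  have hp1 : p.1 = s.1 := rfl
  have hp2 : p.2 = s.2 - 1 := rfl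
  have hplv : p.1 + p.2 = l - 1 := by omega
  obtain ⟨g, h⟩ := rep_mem hn hγ htγ
  set c₀ := tileLevel t with hc₀
  have hgl : g l = s.1 := by
    have := h.xeq s hst; rw [← hl] at this; exact this.symm
  have hpbounds := h.bounds p hup
  have hsbounds := h.bounds s hst
  have hc₀le : c₀ ≤ l - 1 := by omega
  have hltop : l ≤ c₀ + n - 1 := by omega
  -- rep of u
  obtain ⟨gu, hu0⟩ := rep_mem hn hδ huδ
  have hurep : TRep n u l gu := by rw [← hrootδ]; exact hu0
  have hgul : gu l = s.1 := by
    have := hurep.xeq s hsu; rw [← hl] at this; exact this.symm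
  -- p is good; u' = δ-tile of p
  have hpR : p ∈ R := hγ.2.1 t htγ hup
  obtain ⟨hpg1, hpg2⟩ := Hlow p hpR (by omega)
  obtain ⟨hu'δ, hpu'⟩ := tileOf_spec hδ hpR
  set u' := tileOf δ p with hu'def
  have htp : tileOf γ p = t := tileOf_eq hγ htγ hup
  rw [htp] at hpg1 hpg2
  obtain ⟨g', h'0⟩ := rep_mem hn hδ hu'δ
  have h' : TRep n u' c₀ g' := by rw [hc₀, hpg1]; exact h'0
  have hg'm : g' (l - 1) = s.1 := by
    have := h'.xeq p hpu'
    rw [hplv] at this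
    omega
  have hstep := h'.step (l-1) (by omega) (by omega)
  rw [show l - 1 + 1 = l from by ring, hg'm] at hstep
  rcases hstep with hca | hca
  · -- s ∈ u' : then u = u' has level c₀ < l, contradiction
    have hsmem : s ∈ u' := by
      have := h'.mem l (by omega) (by omega)
      rw [hca] at this
      rw [show ((s.1, l - s.1) : Square) = s from Prod.ext rfl (by omega)] at this
      exact this
    have heq : u' = u := by rw [hu'def, hus, tileOf_eq hδ hu'δ hsmem]
    have : tileLevel u = c₀ := by rw [← heq, ← hpg1, hc₀]
    rw [hrootδ] at this
    omega
  · -- w = (s.1 + 1, l - (s.1 + 1)) ∈ u'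
    set w : Square := (s.1 + 1, l - (s.1 + 1)) with hwdef
    have hwmem : w ∈ u' := by
      have := h'.mem l (by omega) (by omega)
      rw [hca] at this
      exact this
    -- the tile t* of γ at level l with rank j := rk δ u
    set j := rk δ u with hj
    have hjlt : j < Ncount γ l := by
      have h1 := rk_lt_count huδ
      rw [hrootδ] at h1
      rw [Ncount_congr hn hγ hδ hRne l]
      exact h1
    obtain ⟨tstar, htsγ, htsl, htsrk⟩ := rk_surj hn hγ l j hjlt
    obtain ⟨gs, hs0⟩ := rep_mem hn hγ htsγ
    have hsrep : TRep n tstar l gs := by rw [← htsl]; exact hs0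
    -- root of t* is strictly right of s
    have hxne : gs l ≠ s.1 := by
      intro he
      have hroot : ((gs l, l - gs l) : Square) = s := by
        rw [he]; exact Prod.ext rfl (by omega)
      have hmem := hsrep.mem l le_rfl (by omega)
      rw [hroot] at hmem
      have : tileOf γ s = tstar := tileOf_eq hγ htsγ hmem
      rw [← hts] at this
      rw [this, htsl] at hc₀
      omega
    have hxgt : s.1 < gs l := by
      rcases lt_or_gt_of_ne hxne with hlt | hgt
      · exfalso
        -- rk γ tstar < j, contradiction
        have e1 := rk_eq_card hn hγ htsγ hsrep
        have e2 := rk_eq_card hn hδ huδ hurep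
        rw [hgul] at e2
        have e3 := card_tiles_left_eq hn hγ hδ l s.1
          (fun q hq h1 h2 => (Hleft q hq h1 h2).1)
        have hlt2 : (γ.filter (fun t' => tileLevel t' = l ∧ RootLt l (gs l) t')).card
            < (γ.filter (fun t' => tileLevel t' = l ∧ RootLt l s.1 t')).card := by
          apply Finset.card_lt_card
          rw [Finset.ssubset_iff_of_subset (Finset.monotone_filter_right γ ?_)]
          · refine ⟨tstar, Finset.mem_filter.mpr ⟨htsγ, htsl,
              ⟨(gs l, l - gs l), hsrep.mem l le_rfl (by omega), by omega, by
                show gs l < s.1; omega⟩⟩, ?_⟩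
            intro hmem
            obtain ⟨-, -, q, hq, hql, hqx⟩ := Finset.mem_filter.mp hmem
            have := hsrep.xeq q hq
            rw [hql] at this
            omega
          · rintro t' - ⟨hl', q, hq, hql, hqx⟩
            exact ⟨hl', q, hq, hql, by omega⟩
        rw [← e1, e3, ← e2] at hlt2
        omega
      · exact hgt
    -- IsNthTile facts
    have A1 : IsNthTile γ l j tstar := (isNthTile_iff γ l j tstar).mpr ⟨htsγ, htsl, htsrk⟩
    have A2 : IsNthTile γ c₀ (rk γ t) t := (isNthTile_iff γ c₀ (rk γ t) t).mpr
      ⟨htγ, hc₀.symm, rfl⟩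
    have A3 : IsNthTile δ l j u := (isNthTile_iff δ l j u).mpr ⟨huδ, hrootδ, rfl⟩
    have A4 : IsNthTile δ c₀ (rk γ t) u' := (isNthTile_iff δ c₀ (rk γ t) u').mpr
      ⟨hu'δ, by rw [← hpg1, hc₀], hpg2.symm⟩
    have hiff := Hor l c₀ j (rk γ t) tstar t u u' A1 A2 A3 A4
    -- δ side: u ≺ u'
    have hBp : TilePrec u u' := by
      refine ⟨s, hsu, w, hwmem, ?_⟩
      have hprec : sqPrec ((s.1, l - s.1) : Square) ((s.1 + 1, l - (s.1 + 1)) : Square) :=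
        sqPrec_mk (Or.inl ⟨Or.inl rfl, by omega⟩)
      rw [show ((s.1, l - s.1) : Square) = s from Prod.ext rfl (by omega)] at hprec
      exact hprec
    -- γ side: ¬ (tstar ≺ t)
    have htne : t ≠ tstar := by
      intro he
      rw [he, htsl] at hc₀
      omega
    have hAn : ¬ TilePrec tstar t := by
      apply not_prec_right h hsrep (by omega) (by omega)
      intro m hm1 hm2
      exact noCross h hsrep (tiles_disjoint hγ htγ htsγ htne) l (by omega) le_rfl
        (by omega) m hm1 hm2 (by omega)
    exact hAn (hiff.mpr hBp)

lemma all_good {n : ℕ} {R : Finset Square} {γ δ : Finset (Finset Square)} (hn : 2 ≤ n)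
    (hγ : IsRibbonTiling n R γ) (hδ : IsRibbonTiling n R δ) (hRne : R.Nonempty)
    (Hor : Orient γ δ) : ∀ s ∈ R, GoodAt γ δ s := by
  classical
  by_contra hcon
  push_neg at hcon
  obtain ⟨s₁, hs₁R, hs₁⟩ := hcon
  set B := R.filter (fun q => ¬ GoodAt γ δ q) with hB
  have hBne : B.Nonempty := ⟨s₁, Finset.mem_filter.mpr ⟨hs₁R, hs₁⟩⟩
  have hBine : (B.image (fun q : Square => q.1 + q.2)).Nonempty := hBne.image _
  set lmin := (B.image (fun q : Square => q.1 + q.2)).min' hBine with hlm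
  set Bl := B.filter (fun q => q.1 + q.2 = lmin) with hBl
  have hBlne : Bl.Nonempty := by
    obtain ⟨q, hq, hql⟩ := Finset.mem_image.mp ((B.image _).min'_mem hBine)
    exact ⟨q, Finset.mem_filter.mpr ⟨hq, hql⟩⟩
  have hBlx : (Bl.image (fun q : Square => q.1)).Nonempty := hBlne.image _
  obtain ⟨s, hsBl, hsx⟩ : ∃ s ∈ Bl, s.1 = (Bl.image (fun q : Square => q.1)).min' hBlx := by
    obtain ⟨q, hq, hql⟩ := Finset.mem_image.mp ((Bl.image _).min'_mem hBlx)
    exact ⟨q, hq, hql⟩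
  obtain ⟨hsB, hslv⟩ := Finset.mem_filter.mp hsBl
  obtain ⟨hsR, hbad⟩ := Finset.mem_filter.mp hsB
  have Hlow : ∀ q ∈ R, q.1 + q.2 < s.1 + s.2 → GoodAt γ δ q := by
    intro q hq hlt
    by_contra hqbad
    have hqB : q ∈ B := Finset.mem_filter.mpr ⟨hq, hqbad⟩
    have := Finset.min'_le (B.image (fun q : Square => q.1 + q.2)) _
      (Finset.mem_image_of_mem _ hqB)
    omega
  have Hleft : ∀ q ∈ R, q.1 + q.2 = s.1 + s.2 → q.1 < s.1 → GoodAt γ δ q := by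
    intro q hq hlv hx
    by_contra hqbad
    have hqB : q ∈ B := Finset.mem_filter.mpr ⟨hq, hqbad⟩
    have hqBl : q ∈ Bl := Finset.mem_filter.mpr ⟨hqB, by omega⟩
    have := Finset.min'_le (Bl.image (fun q : Square => q.1)) _
      (Finset.mem_image_of_mem _ hqBl)
    omega
  have hbad' : ¬ GoodAt δ γ s := fun hg => hbad hg.symm
  have Hlow' : ∀ q ∈ R, q.1 + q.2 < s.1 + s.2 → GoodAt δ γ q :=
    fun q hq hlt => (Hlow q hq hlt).symm
  have Hleft' : ∀ q ∈ R, q.1 + q.2 = s.1 + s.2 → q.1 < s.1 → GoodAt δ γ q :=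
    fun q hq h1 h2 => (Hleft q hq h1 h2).symm
  obtain ⟨htγ, hst⟩ := tileOf_spec hγ hsR
  obtain ⟨huδ, hsu⟩ := tileOf_spec hδ hsR
  obtain ⟨g, h⟩ := rep_mem hn hγ htγ
  obtain ⟨gu, hu⟩ := rep_mem hn hδ huδ
  have hsb := h.bounds s hst
  have hub := hu.bounds s hsu
  have hgetp : ∀ (γ' : Finset (Finset Square)) (g0 : ℤ → ℤ),
      IsRibbonTiling n R γ' → tileOf γ' s ∈ γ' →
      TRep n (tileOf γ' s) (tileLevel (tileOf γ' s)) g0 → s ∈ tileOf γ' s →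
      tileLevel (tileOf γ' s) < s.1 + s.2 →
      (s.1 - 1, s.2) ∈ tileOf γ' s ∨ (s.1, s.2 - 1) ∈ tileOf γ' s := by
    intro γ' g0 hγ' ht0 h0 hs0 hlt
    have hxl : g0 (s.1 + s.2) = s.1 := (h0.xeq s hs0).symm
    have hb0 := h0.bounds s hs0
    have hstep := h0.step (s.1 + s.2 - 1) (by omega) (by omega)
    rw [show s.1 + s.2 - 1 + 1 = s.1 + s.2 from by ring, hxl] at hstep
    have hmem := h0.mem (s.1 + s.2 - 1) (by omega) (by omega)
    rcases hstep with h1 | h1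
    · right
      rw [← h1] at hmem
      rw [show ((s.1, s.1 + s.2 - 1 - s.1) : Square) = (s.1, s.2 - 1) from
        Prod.ext rfl (by omega)] at hmem
      exact hmem
    · left
      have h2 : g0 (s.1 + s.2 - 1) = s.1 - 1 := by omega
      rw [h2] at hmem
      rw [show ((s.1 - 1, s.1 + s.2 - 1 - (s.1 - 1)) : Square) = (s.1 - 1, s.2) from
        Prod.ext rfl (by omega)] at hmem
      exact hmem
  by_cases hct : tileLevel (tileOf γ s) = s.1 + s.2
  · by_cases hcu : tileLevel (tileOf δ s) = s.1 + s.2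
    · exact K0 hn hγ hδ hsR hbad Hleft hct hcu
    · have hcul : tileLevel (tileOf δ s) < s.1 + s.2 := lt_of_le_of_ne (by omega) hcu
      rcases hgetp δ gu hδ huδ hu hsu hcul with hleft | hdown
      · exact K1 hn hδ hγ hsR hbad' Hlow' Hleft' hleft
      · exact K3 hn hδ hγ hRne Hor.symm hsR hbad' Hlow' Hleft' hdown hct
  · have hctl : tileLevel (tileOf γ s) < s.1 + s.2 := lt_of_le_of_ne (by omega) hct
    rcases hgetp γ g hγ htγ h hst hctl with hleft | hdown
    · exact K1 hn hγ hδ hsR hbad Hlow Hleft hleft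
    · by_cases hcu : tileLevel (tileOf δ s) = s.1 + s.2
      · exact K3 hn hγ hδ hRne Hor hsR hbad Hlow Hleft hdown hcu
      · have hcul : tileLevel (tileOf δ s) < s.1 + s.2 := lt_of_le_of_ne (by omega) hcu
        rcases hgetp δ gu hδ huδ hu hsu hcul with hleft' | hdown'
        · exact K1 hn hδ hγ hsR hbad' Hlow' Hleft' hleft'
        · have hpR : (s.1, s.2 - 1) ∈ R := hγ.2.1 _ htγ hdown
          obtain ⟨hg1, hg2⟩ := Hlow (s.1, s.2 - 1) hpR
            (by show s.1 + (s.2 - 1) < s.1 + s.2; omega)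
          rw [tileOf_eq hγ htγ hdown, tileOf_eq hδ huδ hdown'] at hg1 hg2
          exact hbad ⟨hg1, hg2⟩

lemma subset_of_good {n : ℕ} {R : Finset Square} {γ δ : Finset (Finset Square)} (hn : 2 ≤ n)
    (hγ : IsRibbonTiling n R γ) (hδ : IsRibbonTiling n R δ)
    (hgood : ∀ s ∈ R, GoodAt γ δ s) : γ ⊆ δ := by
  intro t ht
  have hribbon := hγ.1 t ht
  have htne : t.Nonempty := Finset.card_pos.mp (by rw [hribbon.2.1]; omega)
  obtain ⟨s₀, hs₀⟩ := htne
  have hs₀R : s₀ ∈ R := hγ.2.1 t ht hs₀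
  obtain ⟨huδ, hs₀u⟩ := tileOf_spec hδ hs₀R
  obtain ⟨h0g1, h0g2⟩ := hgood s₀ hs₀R
  rw [tileOf_eq hγ ht hs₀] at h0g1 h0g2
  have hsubt : t ⊆ tileOf δ s₀ := by
    intro q hq
    have hqR : q ∈ R := hγ.2.1 t ht hq
    obtain ⟨hq1, hq2⟩ := hgood q hqR
    rw [tileOf_eq hγ ht hq] at hq1 hq2
    have heq : tileOf δ q = tileOf δ s₀ :=
      rk_inj hn hδ (tileOf_spec hδ hqR).1 huδ (by rw [← hq1, h0g1]) (by rw [← hq2, h0g2])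
    rw [← heq]
    exact (tileOf_spec hδ hqR).2
  have hcard : (tileOf δ s₀).card ≤ t.card := by
    rw [(hδ.1 _ huδ).2.1, hribbon.2.1]
  rw [Finset.eq_of_subset_of_card_le hsubt hcard]
  exact huδ


/-- If `α` and `β` are order-`n` ribbon tilings of a simply
connected region `R` inducing the same orientation of `G_R` (that is,
`t_{c,i}(α) ≺ t_{d,j}(α)` iff `t_{c,i}(β) ≺ t_{d,j}(β)` for all pairs of tile
indices, and similarly for all edges involving boundary squares), then
`α = β`. -/
theorem ribbon_tiling_determined_by_orientation
    (n : ℕ) (hn : 2 ≤ n) (R : Finset Square)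
    (hreg : IsRegion R) (hsc : SimplyConnectedSq ↑R)
    (α β : Finset (Finset Square))
    (hα : IsRibbonTiling n R α) (hβ : IsRibbonTiling n R β)
    (horTT : ∀ (c d : ℤ) (i j : ℕ) (ta tb ua ub : Finset Square),
      IsNthTile α c i ta → IsNthTile α d j tb →
      IsNthTile β c i ua → IsNthTile β d j ub →
      (TilePrec ta tb ↔ TilePrec ua ub))
    (horTS : ∀ (c : ℤ) (i : ℕ) (ta ua : Finset Square),
      IsNthTile α c i ta → IsNthTile β c i ua →
      ∀ b ∈ boundarySet R,
        (TilePrec ta {b} ↔ TilePrec ua {b}) ∧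
        (TilePrec {b} ta ↔ TilePrec {b} ua)) :
    α = β := by
  have hRne : R.Nonempty := hreg.1
  have good : ∀ s ∈ R, GoodAt α β s := all_good hn hα hβ hRne horTT
  have good' : ∀ s ∈ R, GoodAt β α s := fun s hs => (good s hs).symm
  exact Finset.Subset.antisymm (subset_of_good hn hα hβ good) (subset_of_good hn hβ hα good')
end
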